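/- Let V be an infinite vector space over the two-element field 𝔽₂, and let G = V ⋊ GL(V) be the semidirect product of the additive group of V with its group of linear automorphisms (acting naturally on V). Identify V with the normal subgroup V × {id} of G. Then every maximal subgroup-independent subset M of V (equivalently, every basis of V over 𝔽₂) remains a maximal subgroup-independent subset of G. -/

import Mathlib

/-- The natural action of the group of linear automorphisms of `V` on the
(multiplicative version of the) additive group of `V`. -/
def glAction (V : Type*) [AddCommGroup V] [Module (ZMod 2) V] :
    (V ≃ₗ[ZMod 2] V) →* MulAut (Multiplicative V) where
  toFun f := AddEquiv.toMultiplicative f.toAddEquiv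
  map_one' := by ext x; rfl
  map_mul' f g := by ext x; rfl

/-- The semidirect product `G = V ⋊ GL(V)`. -/
abbrev SDP (V : Type*) [AddCommGroup V] [Module (ZMod 2) V] :=
  Multiplicative V ⋊[glAction V] (V ≃ₗ[ZMod 2] V)

/-- The identification of `V` with the normal subgroup `V × {id}` of `G`. -/
def sdpInl (V : Type*) [AddCommGroup V] [Module (ZMod 2) V] (v : V) : SDP V :=
  SemidirectProduct.inl (Multiplicative.ofAdd v)

section helpers
variable {V : Type*} [AddCommGroup V] [Module (ZMod 2) V]

lemma char2_add_self (x : V) : x + x = 0 := by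
  have h : ((2 : ZMod 2) : ZMod 2) • x = x + x := two_smul _ x
  have h2 : (2 : ZMod 2) = 0 := by decide
  rw [h2, zero_smul] at h
  exact h.symm

lemma zmod2_smul (a : ZMod 2) (x : V) : a • x = 0 ∨ a • x = x := by
  have : a = 0 ∨ a = 1 := by revert a; decide
  rcases this with rfl | rfl
  · left; exact zero_smul _ x
  · right; exact one_smul _ x

lemma mem_span_iff_closure (S : Set V) (x : V) :
    x ∈ Submodule.span (ZMod 2) S ↔ x ∈ AddSubgroup.closure S := by
  constructor
  · intro hx
    induction hx using Submodule.span_induction with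
    | mem y hy => exact AddSubgroup.subset_closure hy
    | zero => exact zero_mem _
    | add y z _ _ hy hz => exact add_mem hy hz
    | smul a y _ hy =>
      rcases zmod2_smul a y with h | h
      · rw [h]; exact zero_mem _
      · rw [h]; exact hy
  · intro hx
    induction hx using AddSubgroup.closure_induction with
    | mem y hy => exact Submodule.subset_span hy
    | zero => exact zero_mem _
    | add y z _ _ hy hz => exact add_mem hy hz
    | neg y _ hy => exact neg_mem hy

lemma sdpInl_injective : Function.Injective (sdpInl V) := fun a b h =>
  Multiplicative.ofAdd.injective (SemidirectProduct.inl_injective h)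

lemma sdpInl_add (u w : V) : sdpInl V (u + w) = sdpInl V u * sdpInl V w := by
  unfold sdpInl
  rw [ofAdd_add, map_mul]

lemma sdpInl_right (u : V) : (sdpInl V u).right = 1 := rfl

lemma glAction_apply (f : V ≃ₗ[ZMod 2] V) (n : Multiplicative V) :
    glAction V f n = Multiplicative.ofAdd (f (Multiplicative.toAdd n)) := rfl

lemma linEquiv_inv_apply (f : V ≃ₗ[ZMod 2] V) (x : V) : f⁻¹ x = f.symm x := rfl

lemma sdp_conj (g : SDP V) (u : V) :
    g * sdpInl V u * g⁻¹ = sdpInl V (g.right u) := by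
  ext
  · simp only [sdpInl, SemidirectProduct.mul_left, SemidirectProduct.inv_left,
      SemidirectProduct.mul_right, SemidirectProduct.left_inl, SemidirectProduct.right_inl,
      mul_one, glAction_apply, toAdd_ofAdd, linEquiv_inv_apply, LinearEquiv.apply_symm_apply,
      ofAdd_toAdd]
    rw [mul_comm g.left, mul_inv_cancel_right]
    rfl
  · simp [sdpInl, SemidirectProduct.mul_right, SemidirectProduct.inv_right]

lemma sdp_eq_inl_of_right_eq_one (g : SDP V) (h : g.right = 1) :
    g = sdpInl V (Multiplicative.toAdd g.left) := by
  conv_lhs => rw [← SemidirectProduct.inl_left_mul_inr_right g]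
  rw [h]
  simp [sdpInl]

lemma mem_closure_mult (S : Set V) (x : V) :
    Multiplicative.ofAdd x ∈ Subgroup.closure (Multiplicative.ofAdd '' S) ↔
      x ∈ AddSubgroup.closure S := by
  constructor <;> intro h
  · have key : ∀ y : Multiplicative V, y ∈ Subgroup.closure (Multiplicative.ofAdd '' S) →
        Multiplicative.toAdd y ∈ AddSubgroup.closure S := by
      intro y hy
      induction hy using Subgroup.closure_induction with
      | mem z hz => obtain ⟨t, ht, rfl⟩ := hz; exact AddSubgroup.subset_closure ht
      | one => exact zero_mem _
      | mul y z _ _ hy hz => exact add_mem hy hz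
      | inv y _ hy => exact neg_mem hy
    exact key _ h
  · induction h using AddSubgroup.closure_induction with
    | mem y hy => exact Subgroup.subset_closure (Set.mem_image_of_mem _ hy)
    | zero => exact one_mem _
    | add y z _ _ hy hz => exact mul_mem hy hz
    | neg y _ hy => exact inv_mem hy

lemma mem_closure_sdpInl_iff (S : Set V) (x : V) :
    sdpInl V x ∈ Subgroup.closure (sdpInl V '' S) ↔ x ∈ AddSubgroup.closure S := by
  have himg : sdpInl V '' S =
      (SemidirectProduct.inl : Multiplicative V →* SDP V) '' (Multiplicative.ofAdd '' S) := by
    rw [Set.image_image]; rfl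
  rw [himg, ← MonoidHom.map_closure]
  constructor
  · intro h
    rcases Subgroup.mem_map.mp h with ⟨y, hy, hxy⟩
    rw [← mem_closure_mult]
    have : y = Multiplicative.ofAdd x := SemidirectProduct.inl_injective hxy
    rwa [← this]
  · intro h
    exact Subgroup.mem_map_of_mem _ ((mem_closure_mult S x).mpr h)

/-- coefficient extraction lemma -/
lemma exists_coeff {M : Set V} (d : V) (hd : d ≠ 0) (hspan : d ∈ Submodule.span (ZMod 2) M) :
    ∃ m ∈ M, d + m ∈ Submodule.span (ZMod 2) (M \ {m}) := by
  classical
  obtain ⟨c, hsupp, hsum⟩ := Submodule.mem_span_set.mp hspan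
  have hc : c ≠ 0 := by
    rintro rfl
    exact hd (by simpa using hsum.symm)
  obtain ⟨m, hm⟩ := Finsupp.support_nonempty_iff.mpr hc
  refine ⟨m, hsupp hm, ?_⟩
  have hcm : c m = 1 := by
    have h0 : c m ≠ 0 := Finsupp.mem_support_iff.mp hm
    revert h0; generalize c m = a; revert a; decide
  have hd' : d = c m • m + ∑ x ∈ c.support.erase m, c x • x := by
    rw [← hsum, Finsupp.sum]
    exact (Finset.add_sum_erase _ _ hm).symm
  have hterm : (∑ x ∈ c.support.erase m, c x • x) ∈ Submodule.span (ZMod 2) (M \ {m}) := by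
    refine Submodule.sum_mem _ fun x hx => ?_
    refine Submodule.smul_mem _ _ (Submodule.subset_span ?_)
    exact ⟨hsupp (Finset.mem_of_mem_erase hx), Finset.ne_of_mem_erase hx⟩
  have : d + m = ∑ x ∈ c.support.erase m, c x • x := by
    rw [hd', hcm, one_smul, add_comm m, add_assoc, char2_add_self, add_zero]
  rw [this]
  exact hterm

end helpers

/-- for an infinite vector space `V` over `𝔽₂ = ZMod 2`, every
maximal subgroup-independent subset `M` of `V` remains maximal
subgroup-independent in the semidirect product `G = V ⋊ GL(V)`. -/
theorem maximal_independent_in_semidirect_product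
    (V : Type*) [AddCommGroup V] [Module (ZMod 2) V] [Infinite V]
    (M : Set V)
    (hind : ∀ b ∈ M, b ∉ (AddSubgroup.closure (M \ {b}) : Set V))
    (hmax : ∀ v : V, v ∉ M →
      ¬ (∀ b ∈ insert v M, b ∉ (AddSubgroup.closure (insert v M \ {b}) : Set V))) :
    (∀ g ∈ sdpInl V '' M,
        g ∉ (Subgroup.closure (sdpInl V '' M \ {g}) : Set (SDP V))) ∧
    (∀ g : SDP V, g ∉ sdpInl V '' M →
      ¬ (∀ b ∈ insert g (sdpInl V '' M),
          b ∉ (Subgroup.closure (insert g (sdpInl V '' M) \ {b}) : Set (SDP V)))) := by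
  constructor
  · -- independence
    rintro g ⟨b, hbM, rfl⟩ hmem
    have himg : sdpInl V '' M \ {sdpInl V b} = sdpInl V '' (M \ {b}) := by
      rw [← Set.image_singleton, Set.image_diff sdpInl_injective]
    rw [himg] at hmem
    exact hind b hbM ((mem_closure_sdpInl_iff _ _).mp hmem)
  · -- maximality
    intro g hg hall
    -- M spans V
    have hspan : ∀ v : V, v ∈ AddSubgroup.closure M := by
      intro v
      by_cases hvM : v ∈ M
      · exact AddSubgroup.subset_closure hvM
      · have := hmax v hvM
        push_neg at this
        obtain ⟨b, hb, hbmem⟩ := this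
        rcases hb with rfl | hbM
        · refine AddSubgroup.closure_mono ?_ hbmem
          intro x hx
          rcases hx.1 with rfl | hxM
          · exact absurd rfl hx.2
          · exact hxM
        · have hbv : b ≠ v := fun h => hvM (h ▸ hbM)
          have heq : insert v M \ {b} = insert v (M \ {b}) := by
            ext x
            simp only [Set.mem_diff, Set.mem_insert_iff, Set.mem_singleton_iff]
            constructor
            · rintro ⟨rfl | hxM, hxb⟩
              · exact Or.inl rfl
              · exact Or.inr ⟨hxM, hxb⟩
            · rintro (rfl | ⟨hxM, hxb⟩)
              · exact ⟨Or.inl rfl, hbv.symm⟩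
              · exact ⟨Or.inr hxM, hxb⟩
          rw [heq] at hbmem
          have hbmem' : b ∈ Submodule.span (ZMod 2) (insert v (M \ {b})) :=
            (mem_span_iff_closure _ _).mpr hbmem
          obtain ⟨a, z, hz, hbeq⟩ := Submodule.mem_span_insert.mp hbmem'
          rcases zmod2_smul a v with h | h
          · rw [h, zero_add] at hbeq
            exact absurd ((mem_span_iff_closure _ _).mp (hbeq ▸ hz)) (hind b hbM)
          · rw [h] at hbeq
            have hv : v = b + z := by
              rw [hbeq, add_assoc, char2_add_self, add_zero]
            rw [hv]
            refine add_mem (AddSubgroup.subset_closure hbM) ?_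
            exact AddSubgroup.closure_mono Set.diff_subset ((mem_span_iff_closure _ _).mp hz)
    by_cases hgr : g.right = 1
    · -- g lies in the copy of V
      set v := Multiplicative.toAdd g.left with hv
      have hgv : g = sdpInl V v := sdp_eq_inl_of_right_eq_one g hgr
      have hvM : v ∉ M := fun h => hg ⟨v, h, hgv.symm⟩
      have := hmax v hvM
      push_neg at this
      obtain ⟨b, hb, hbmem⟩ := this
      have hbins : sdpInl V b ∈ insert g (sdpInl V '' M) := by
        rcases hb with rfl | hbM
        · exact Or.inl hgv.symm
        · exact Or.inr ⟨b, hbM, rfl⟩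
      refine hall (sdpInl V b) hbins ?_
      have hsub : sdpInl V '' (insert v M \ {b}) ⊆
          insert g (sdpInl V '' M) \ {sdpInl V b} := by
        rintro x ⟨u, ⟨hu, hub⟩, rfl⟩
        refine ⟨?_, fun h => hub (sdpInl_injective h)⟩
        rcases hu with rfl | huM
        · exact Or.inl hgv.symm
        · exact Or.inr ⟨u, huM, rfl⟩
      exact Subgroup.closure_mono hsub ((mem_closure_sdpInl_iff _ _).mpr hbmem)
    · -- g has nontrivial linear part
      set f := g.right with hf
      have hmove : ∃ b ∈ M, f b ≠ b := by
        by_contra hcon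
        push_neg at hcon
        apply hgr
        ext w
        have hw : w ∈ AddSubgroup.closure M := hspan w
        rw [← mem_span_iff_closure] at hw
        have : f w = w := by
          induction hw using Submodule.span_induction with
          | mem y hy => exact hcon y hy
          | zero => exact map_zero _
          | add y z _ _ hy hz => rw [map_add, hy, hz]
          | smul a y _ hy => rw [map_smul, hy]
        simpa using this
      obtain ⟨b, hbM, hfb⟩ := hmove
      set d := f b + b with hd
      have hd0 : d ≠ 0 := by
        intro h
        apply hfb
        have : f b = f b + (b + b) := by rw [char2_add_self, add_zero]
        rw [this, ← add_assoc, ← hd, h, zero_add]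
      have hdspan : d ∈ Submodule.span (ZMod 2) M := by
        rw [mem_span_iff_closure]; exact hspan d
      obtain ⟨m, hmM, hs⟩ := exists_coeff d hd0 hdspan
      set s := d + m with hs'
      -- the subgroup generated by everything except `sdpInl m`
      set T := insert g (sdpInl V '' M) \ {sdpInl V m} with hT
      have hgm : g ≠ sdpInl V m := by
        intro h
        exact hgr (by rw [hf, h]; rfl)
      have hgT : g ∈ Subgroup.closure T :=
        Subgroup.subset_closure ⟨Or.inl rfl, hgm⟩
      have hW : ∀ u, u ∈ AddSubgroup.closure (M \ {m}) → sdpInl V u ∈ Subgroup.closure T := by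
        intro u hu
        refine Subgroup.closure_mono ?_ ((mem_closure_sdpInl_iff _ _).mpr hu)
        rintro x ⟨w, ⟨hwM, hwm⟩, rfl⟩
        exact ⟨Or.inr ⟨w, hwM, rfl⟩, fun h => hwm (sdpInl_injective h)⟩
      have hsH : sdpInl V s ∈ Subgroup.closure T :=
        hW s ((mem_span_iff_closure _ _).mp hs)
      have hmain : sdpInl V m ∈ Subgroup.closure T := by
        by_cases hbm : b = m
        · -- f m = s, and m = f⁻¹ s
          have hfm : f m = s := by
            rw [hs', hd, hbm, add_assoc, char2_add_self, add_zero]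
          have hconj : g⁻¹ * sdpInl V s * g = sdpInl V m := by
            have := sdp_conj g⁻¹ s
            rw [inv_inv] at this
            rw [this, SemidirectProduct.inv_right]
            congr 1
            rw [linEquiv_inv_apply, ← hfm, ← hf, LinearEquiv.symm_apply_apply]
          rw [← hconj]
          exact Subgroup.mul_mem _ (Subgroup.mul_mem _ (Subgroup.inv_mem _ hgT) hsH) hgT
        · -- b ∈ M \ {m}
          have hbH : sdpInl V b ∈ Subgroup.closure T :=
            hW b (AddSubgroup.subset_closure ⟨hbM, hbm⟩)
          have hfbH : sdpInl V (f b) ∈ Subgroup.closure T := by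
            have := sdp_conj g b
            rw [← hf] at this
            rw [← this]
            exact Subgroup.mul_mem _ (Subgroup.mul_mem _ hgT hbH) (Subgroup.inv_mem _ hgT)
          have hmeq : f b + b + s = m := by
            rw [hs', ← hd, ← add_assoc, char2_add_self, zero_add]
          rw [← hmeq, sdpInl_add, sdpInl_add]
          exact Subgroup.mul_mem _ (Subgroup.mul_mem _ hfbH hbH) hsH
      refine hall (sdpInl V m) (Or.inr ⟨m, hmM, rfl⟩) ?_
      rw [← hT]
      exact hmain
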